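/- For every n ≥ 1: I(C_{3n}; −1) = 2·(−1)^n, I(C_{3n+1}; −1) = (−1)^n, and I(C_{3n+2}; −1) = (−1)^{n+1}. -/

import Mathlib

open Polynomial
open Fin.NatCast

section Helpers
open Finset

def NoTwo (s : Finset ℕ) : Prop := ∀ a ∈ s, a + 1 ∉ s


instance : DecidablePred NoTwo := fun s => by unfold NoTwo; infer_instance

def Ppath (k : ℕ) : ℤ := ∑ t ∈ (Finset.range k).powerset.filter NoTwo, (-1 : ℤ) ^ t.card

lemma NoTwo.mono {s t : Finset ℕ} (h : NoTwo s) (hts : t ⊆ s) : NoTwo t :=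
  fun a ha hb => h a (hts ha) (hts hb)

lemma Ppath_zero : Ppath 0 = 1 := by decide

lemma Ppath_one : Ppath 1 = 0 := by decide

lemma Ppath_rec (k : ℕ) : Ppath (k + 2) = Ppath (k + 1) - Ppath k := by
  classical
  have hsplit := Finset.sum_filter_add_sum_filter_not
    (((Finset.range (k+2)).powerset).filter NoTwo) (fun s => k+1 ∈ s) (fun s => (-1:ℤ)^s.card)
  have h1 : ∑ s ∈ ((((Finset.range (k+2)).powerset).filter NoTwo).filter (fun s => ¬ (k+1 ∈ s))),
      (-1:ℤ)^s.card = Ppath (k+1) := by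
    rw [Ppath]
    refine Finset.sum_nbij' id id ?_ ?_ ?_ ?_ ?_ <;>
      simp only [mem_filter, mem_powerset, id_eq, and_imp]
    · intro s hs hNT hk
      refine ⟨?_, hNT⟩
      intro a ha
      have := hs ha
      simp only [mem_range] at this ⊢
      rcases Nat.lt_or_ge a (k+1) with h|h
      · exact h
      · exfalso; have : a = k+1 := by omega
        exact hk (this ▸ ha)
    · intro s hs hNT
      refine ⟨⟨?_, hNT⟩, ?_⟩
      · intro a ha; have := hs ha; simp only [mem_range] at this ⊢; omega
      · intro hmem; have := hs hmem; simp at this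
    · intro a _ _ _; trivial
    · intro a _ _; trivial
    · intro a _ _ _; trivial
  have h2 : ∑ s ∈ ((((Finset.range (k+2)).powerset).filter NoTwo).filter (fun s => k+1 ∈ s)),
      (-1:ℤ)^s.card = - Ppath k := by
    rw [Ppath, ← Finset.sum_neg_distrib]
    refine Finset.sum_nbij' (fun s => s.erase (k+1)) (fun t => insert (k+1) t) ?_ ?_ ?_ ?_ ?_ <;>
      simp only [mem_filter, mem_powerset, and_imp]
    · intro s hs hNT hk
      refine ⟨?_, hNT.mono (erase_subset _ _)⟩
      intro a ha
      rw [mem_erase] at ha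
      have h1 := hs ha.2
      simp only [mem_range] at h1 ⊢
      have : a ≠ k := by
        rintro rfl
        exact hNT a ha.2 hk
      omega
    · intro t ht hNT
      have hk1 : k+1 ∉ t := fun h => by have := ht h; simp at this
      refine ⟨⟨?_, ?_⟩, mem_insert_self _ _⟩
      · intro a ha
        rw [mem_insert] at ha
        rcases ha with rfl | ha
        · simp
        · have := ht ha; simp only [mem_range] at this ⊢; omega
      · intro a ha hb
        rw [mem_insert] at ha hb
        rcases ha with rfl | ha
        · rcases hb with hb | hb
          · omega
          · have := ht hb; simp only [mem_range] at this; omega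
        · rcases hb with hb | hb
          · have := ht ha; simp only [mem_range] at this; omega
          · exact hNT a ha hb
    · intro s _ _ hk; exact insert_erase hk
    · intro t ht _
      apply erase_insert
      intro h; have := ht h; simp at this
    · intro s _ _ hk
      rw [Finset.card_erase_of_mem hk]
      have : 1 ≤ s.card := Finset.card_pos.2 ⟨k+1, hk⟩
      obtain ⟨c, hc⟩ : ∃ c, s.card = c + 1 := ⟨s.card - 1, by omega⟩
      rw [hc]
      simp [pow_succ]
  have hfull : ∑ s ∈ (((Finset.range (k+2)).powerset).filter NoTwo), (-1:ℤ)^s.card = Ppath (k+2) := rfl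
  rw [h1, h2, hfull] at hsplit
  linarith

lemma Ppath_flip (k : ℕ) : Ppath (k+3) = - Ppath k := by
  have h1 := Ppath_rec (k+1)
  have h2 := Ppath_rec k
  have h3 : Ppath (k+3) = Ppath (k+2) - Ppath (k+1) := Ppath_rec (k+1)
  linarith

lemma Ppath_values (n : ℕ) :
    Ppath (3*n) = (-1)^n ∧ Ppath (3*n+1) = 0 ∧ Ppath (3*n+2) = -(-1)^n := by
  induction n with
  | zero =>
    refine ⟨by simpa using Ppath_zero, by simpa using Ppath_one, ?_⟩
    have := Ppath_rec 0
    rw [Ppath_zero, Ppath_one] at this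
    simpa using this
  | succ m ih =>
    obtain ⟨h0, h1, h2⟩ := ih
    refine ⟨?_, ?_, ?_⟩
    · rw [show 3*(m+1) = 3*m + 3 by ring, Ppath_flip, h0, pow_succ]; ring
    · rw [show 3*(m+1)+1 = (3*m+1) + 3 by ring, Ppath_flip, h1]; ring
    · rw [show 3*(m+1)+2 = (3*m+2) + 3 by ring, Ppath_flip, h2, pow_succ]; ring

lemma mod_succ_eq {k a b : ℕ} (ha : a < k+3) (h : (a+1) % (k+3) = b) (hb0 : b ≠ 0) :
    b = a + 1 := by
  rcases Nat.lt_or_ge (a+1) (k+3) with h'|h'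
  · rw [Nat.mod_eq_of_lt h'] at h; omega
  · have he : a + 1 = k + 3 := by omega
    rw [he, Nat.mod_self] at h; omega

lemma cycle_adj_iff {k : ℕ} {u v : Fin (k+3)} :
    (SimpleGraph.cycleGraph (k+3)).Adj u v ↔
      ((u.val + 1) % (k+3) = v.val ∨ (v.val + 1) % (k+3) = u.val) := by
  have key : ∀ a b : Fin (k+3), a - b = 1 ↔ (b.val + 1) % (k+3) = a.val := by
    intro a b
    rw [sub_eq_iff_eq_add, Fin.ext_iff, Fin.val_add]
    have h1 : ((1 : Fin (k+3)) : ℕ) = 1 := rfl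
    rw [h1, Nat.add_comm 1 b.val]
    exact eq_comm
  rw [SimpleGraph.cycleGraph_adj]
  rw [key, key]
  tauto


end Helpers
open Finset

lemma NoTwo_def (s : Finset ℕ) : NoTwo s ↔ ∀ a ∈ s, a + 1 ∉ s := Iff.rfl

lemma Ppath_def (k : ℕ) : Ppath k = ∑ t ∈ (Finset.range k).powerset.filter NoTwo, (-1 : ℤ) ^ t.card := rfl

open Classical in
/-- The independence polynomial of a graph: `∑ₖ sₖ xᵏ` where `sₖ` is the number of
independent (stable) sets of cardinality `k`. -/
noncomputable def indPoly {V : Type*} [Fintype V] (G : SimpleGraph V) : Polynomial ℤ :=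
  ∑ s : Finset V, if ∀ u ∈ s, ∀ v ∈ s, ¬ G.Adj u v then Polynomial.X ^ s.card else 0

lemma cast_val {k a : ℕ} (h : a < k + 3) : ((a : ℕ) : Fin (k+3)).val = a :=
  Fin.val_cast_of_lt h

lemma vrange {k : ℕ} {s : Finset (Fin (k+3))}
    (hind : ∀ u ∈ s, ∀ v ∈ s, ¬ (SimpleGraph.cycleGraph (k+3)).Adj u v)
    (h0 : (0 : Fin (k+3)) ∈ s) {v : Fin (k+3)} (hv : v ∈ s) (hv0 : v ≠ 0) :
    2 ≤ v.val ∧ v.val ≤ k+1 := by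
  have hvne : v.val ≠ 0 := fun h => hv0 (Fin.ext h)
  have hne1 : v.val ≠ 1 := by
    intro h
    refine hind (0:Fin (k+3)) h0 v hv ?_
    rw [cycle_adj_iff]
    left
    rw [show ((0:Fin (k+3)).val) = 0 from rfl, h]
    exact Nat.mod_eq_of_lt (by omega)
  have hne2 : v.val ≠ k+2 := by
    intro h
    refine hind v hv (0:Fin (k+3)) h0 ?_
    rw [cycle_adj_iff]
    left
    rw [h, show ((0:Fin (k+3)).val) = 0 from rfl, show k+2+1 = k+3 from rfl, Nat.mod_self]
  have := v.isLt
  omega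

lemma eval_indPoly_cycle (k : ℕ) :
    (indPoly (SimpleGraph.cycleGraph (k+3))).eval (-1) = Ppath (k+2) - Ppath k := by
  classical
  rw [indPoly, Polynomial.eval_finset_sum]
  simp only [apply_ite (Polynomial.eval (-1 : ℤ)), Polynomial.eval_pow, Polynomial.eval_X,
    Polynomial.eval_zero]
  rw [← Finset.sum_filter]
  have hsplit := Finset.sum_filter_add_sum_filter_not
    (Finset.univ.filter (fun s : Finset (Fin (k+3)) =>
      ∀ u ∈ s, ∀ v ∈ s, ¬ (SimpleGraph.cycleGraph (k+3)).Adj u v))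
    (fun s => (0 : Fin (k+3)) ∈ s) (fun s => (-1:ℤ)^s.card)
  have h1 : ∑ s ∈ ((Finset.univ.filter (fun s : Finset (Fin (k+3)) =>
      ∀ u ∈ s, ∀ v ∈ s, ¬ (SimpleGraph.cycleGraph (k+3)).Adj u v)).filter
      (fun s => ¬ (0 : Fin (k+3)) ∈ s)), (-1:ℤ)^s.card = Ppath (k+2) := by
    rw [Ppath_def]
    refine Finset.sum_nbij' (fun s => s.image (fun v : Fin (k+3) => v.val - 1))
      (fun t => t.image (fun a : ℕ => ((a+1 : ℕ) : Fin (k+3)))) ?_ ?_ ?_ ?_ ?_ <;>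
      simp only [mem_filter, mem_univ, true_and, mem_powerset, and_imp]
    · intro s hind h0
      have hval : ∀ v ∈ s, 1 ≤ v.val := by
        intro v hv
        have : v ≠ 0 := fun h => h0 (h ▸ hv)
        have : v.val ≠ 0 := fun h => this (Fin.ext h)
        omega
      constructor
      · intro a ha
        rw [Finset.mem_image] at ha
        obtain ⟨v, hv, rfl⟩ := ha
        have := v.isLt
        have := hval v hv
        simp only [mem_range]
        omega
      · rw [NoTwo_def]
        intro a ha hcontra
        rw [Finset.mem_image] at ha hcontra
        obtain ⟨u, hu, hu2⟩ := ha
        obtain ⟨w, hw, hw2⟩ := hcontra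
        have h1u := hval u hu
        have h1w := hval w hw
        have huv : u.val = a + 1 := by omega
        have hwv : w.val = a + 2 := by omega
        refine hind u hu w hw ?_
        rw [cycle_adj_iff]
        left
        rw [huv, hwv, Nat.mod_eq_of_lt (by have := w.isLt; omega)]
    · intro t ht hNT
      rw [NoTwo_def] at hNT
      have hlt : ∀ a ∈ t, a < k + 2 := by
        intro a ha; have := ht ha; simpa using this
      constructor
      · intro u hu v hv hadj
        rw [Finset.mem_image] at hu hv
        obtain ⟨a, ha, rfl⟩ := hu
        obtain ⟨b, hb, rfl⟩ := hv
        rw [cycle_adj_iff, cast_val (by have := hlt a ha; omega),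
          cast_val (by have := hlt b hb; omega)] at hadj
        rcases hadj with h | h
        · have := mod_succ_eq (k := k) (by have := hlt a ha; omega) h (by omega)
          have : b = a + 1 := by omega
          exact hNT a ha (this ▸ hb)
        · have := mod_succ_eq (k := k) (by have := hlt b hb; omega) h (by omega)
          have : a = b + 1 := by omega
          exact hNT b hb (this ▸ ha)
      · intro hmem
        rw [Finset.mem_image] at hmem
        obtain ⟨a, ha, h⟩ := hmem
        have : ((a+1 : ℕ) : Fin (k+3)).val = a + 1 := cast_val (by have := hlt a ha; omega)
        rw [h] at this
        simp at this
    · intro s hind h0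
      rw [Finset.image_image]
      have : Set.EqOn ((fun a : ℕ => ((a+1 : ℕ) : Fin (k+3))) ∘ (fun v : Fin (k+3) => v.val - 1))
          id ↑s := by
        intro v hv
        simp only [Function.comp_apply, id_eq]
        have hv1 : 1 ≤ v.val := by
          have : v ≠ 0 := fun h => h0 (h ▸ hv)
          have : v.val ≠ 0 := fun h => this (Fin.ext h)
          omega
        rw [show v.val - 1 + 1 = v.val from by omega]
        exact Fin.cast_val_eq_self v
      rw [Finset.image_congr this, Finset.image_id]
    · intro t ht hNT
      rw [Finset.image_image]
      have hlt : ∀ a ∈ t, a < k + 2 := by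
        intro a ha; have := ht ha; simpa using this
      have : Set.EqOn ((fun v : Fin (k+3) => v.val - 1) ∘ (fun a : ℕ => ((a+1 : ℕ) : Fin (k+3))))
          id ↑t := by
        intro a ha
        simp only [Function.comp_apply, id_eq]
        rw [cast_val (by have := hlt a ha; omega)]
        omega
      rw [Finset.image_congr this, Finset.image_id]
    · intro s hind h0
      congr 1
      rw [Finset.card_image_of_injOn]
      intro u hu v hv h
      have hu1 : 1 ≤ (u : Fin (k+3)).val := by
        have : u ≠ 0 := fun he => h0 (he ▸ hu)
        have : (u : Fin (k+3)).val ≠ 0 := fun he => this (Fin.ext he)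
        omega
      have hv1 : 1 ≤ (v : Fin (k+3)).val := by
        have : v ≠ 0 := fun he => h0 (he ▸ hv)
        have : (v : Fin (k+3)).val ≠ 0 := fun he => this (Fin.ext he)
        omega
      have h' : (u : Fin (k+3)).val - 1 = (v : Fin (k+3)).val - 1 := h
      exact Fin.ext (by omega)
  have h2 : ∑ s ∈ ((Finset.univ.filter (fun s : Finset (Fin (k+3)) =>
      ∀ u ∈ s, ∀ v ∈ s, ¬ (SimpleGraph.cycleGraph (k+3)).Adj u v)).filter
      (fun s => (0 : Fin (k+3)) ∈ s)), (-1:ℤ)^s.card = - Ppath k := by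
    rw [Ppath_def, ← Finset.sum_neg_distrib]
    refine Finset.sum_nbij' (fun s => (s.erase 0).image (fun v : Fin (k+3) => v.val - 2))
      (fun t => insert (0 : Fin (k+3)) (t.image (fun a : ℕ => ((a+2 : ℕ) : Fin (k+3)))))
      ?_ ?_ ?_ ?_ ?_ <;>
      simp only [mem_filter, mem_univ, true_and, mem_powerset, and_imp]
    · intro s hind h0
      constructor
      · intro a ha
        rw [Finset.mem_image] at ha
        obtain ⟨v, hv, rfl⟩ := ha
        rw [Finset.mem_erase] at hv
        have := vrange hind h0 hv.2 hv.1
        simp only [mem_range]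
        omega
      · rw [NoTwo_def]
        intro a ha hcontra
        rw [Finset.mem_image] at ha hcontra
        obtain ⟨u, hu, hu2⟩ := ha
        obtain ⟨w, hw, hw2⟩ := hcontra
        rw [Finset.mem_erase] at hu hw
        have hru := vrange hind h0 hu.2 hu.1
        have hrw := vrange hind h0 hw.2 hw.1
        refine hind u hu.2 w hw.2 ?_
        rw [cycle_adj_iff]
        left
        rw [show u.val + 1 = w.val from by omega, Nat.mod_eq_of_lt w.isLt]
    · intro t ht hNT
      rw [NoTwo_def] at hNT
      have hlt : ∀ a ∈ t, a < k := fun a ha => by simpa using ht ha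
      have hval2 : ∀ a ∈ t, ((a+2:ℕ) : Fin (k+3)).val = a + 2 :=
        fun a ha => cast_val (by have := hlt a ha; omega)
      refine ⟨?_, Finset.mem_insert_self _ _⟩
      intro u hu v hv hadj
      rw [Finset.mem_insert] at hu hv
      rcases hu with rfl | hu
      · rcases hv with rfl | hv
        · exact hadj.ne rfl
        · rw [Finset.mem_image] at hv
          obtain ⟨b, hb, rfl⟩ := hv
          rw [cycle_adj_iff, hval2 b hb, show ((0:Fin (k+3)).val) = 0 from rfl] at hadj
          rcases hadj with h | h
          · rw [Nat.mod_eq_of_lt (by omega : (0:ℕ)+1 < k+3)] at h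
            omega
          · rw [Nat.mod_eq_of_lt (by have := hlt b hb; omega)] at h
            omega
      · rcases hv with rfl | hv
        · rw [Finset.mem_image] at hu
          obtain ⟨b, hb, rfl⟩ := hu
          rw [cycle_adj_iff, hval2 b hb, show ((0:Fin (k+3)).val) = 0 from rfl] at hadj
          rcases hadj with h | h
          · rw [Nat.mod_eq_of_lt (by have := hlt b hb; omega)] at h
            omega
          · rw [Nat.mod_eq_of_lt (by omega : (0:ℕ)+1 < k+3)] at h
            omega
        · rw [Finset.mem_image] at hu hv
          obtain ⟨a, ha, rfl⟩ := hu
          obtain ⟨b, hb, rfl⟩ := hv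
          rw [cycle_adj_iff, hval2 a ha, hval2 b hb] at hadj
          rcases hadj with h | h
          · rw [Nat.mod_eq_of_lt (by have := hlt a ha; omega)] at h
            have : b = a + 1 := by omega
            exact hNT a ha (this ▸ hb)
          · rw [Nat.mod_eq_of_lt (by have := hlt b hb; omega)] at h
            have : a = b + 1 := by omega
            exact hNT b hb (this ▸ ha)
    · intro s hind h0
      rw [Finset.image_image]
      have heq : Set.EqOn ((fun a : ℕ => ((a+2 : ℕ) : Fin (k+3))) ∘
          (fun v : Fin (k+3) => v.val - 2)) id ↑(s.erase 0) := by
        intro v hv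
        have hv' : v ∈ s.erase 0 := Finset.mem_coe.mp hv
        rw [Finset.mem_erase] at hv'
        have := vrange hind h0 hv'.2 hv'.1
        simp only [Function.comp_apply, id_eq]
        rw [show v.val - 2 + 2 = v.val from by omega]
        exact Fin.cast_val_eq_self v
      rw [Finset.image_congr heq, Finset.image_id, Finset.insert_erase h0]
    · intro t ht hNT
      have hlt : ∀ a ∈ t, a < k := fun a ha => by simpa using ht ha
      have h0no : (0 : Fin (k+3)) ∉ t.image (fun a : ℕ => ((a+2 : ℕ) : Fin (k+3))) := by
        intro h
        rw [Finset.mem_image] at h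
        obtain ⟨a, ha, h⟩ := h
        have : ((a+2:ℕ) : Fin (k+3)).val = a + 2 := cast_val (by have := hlt a ha; omega)
        rw [h] at this
        simp at this
      rw [Finset.erase_insert h0no, Finset.image_image]
      have heq : Set.EqOn ((fun v : Fin (k+3) => v.val - 2) ∘
          (fun a : ℕ => ((a+2 : ℕ) : Fin (k+3)))) id ↑t := by
        intro a ha
        have ha' : a ∈ t := Finset.mem_coe.mp ha
        simp only [Function.comp_apply, id_eq]
        rw [cast_val (by have := hlt a ha'; omega)]
        omega
      rw [Finset.image_congr heq, Finset.image_id]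
    · intro s hind h0
      have hcardpos : 1 ≤ s.card := Finset.card_pos.2 ⟨0, h0⟩
      have hcard : ((s.erase 0).image (fun v : Fin (k+3) => v.val - 2)).card = s.card - 1 := by
        rw [Finset.card_image_of_injOn, Finset.card_erase_of_mem h0]
        intro u hu v hv h
        have hu' : u ∈ s.erase 0 := Finset.mem_coe.mp hu
        have hv' : v ∈ s.erase 0 := Finset.mem_coe.mp hv
        rw [Finset.mem_erase] at hu' hv'
        have h2u := vrange hind h0 hu'.2 hu'.1
        have h2v := vrange hind h0 hv'.2 hv'.1
        have h' : (u : Fin (k+3)).val - 2 = (v : Fin (k+3)).val - 2 := h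
        exact Fin.ext (by omega)
      rw [hcard]
      obtain ⟨c, hc⟩ : ∃ c, s.card = c + 1 := ⟨s.card - 1, by omega⟩
      rw [hc]
      simp [pow_succ]
  rw [← hsplit, h1, h2]
  ring

theorem indPoly_cycle_at_neg_one (n : ℕ) (hn : 1 ≤ n) :
    (indPoly (SimpleGraph.cycleGraph (3 * n))).eval (-1) = 2 * (-1) ^ n ∧
    (indPoly (SimpleGraph.cycleGraph (3 * n + 1))).eval (-1) = (-1) ^ n ∧
    (indPoly (SimpleGraph.cycleGraph (3 * n + 2))).eval (-1) = (-1) ^ (n + 1) := by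
  obtain ⟨m, rfl⟩ : ∃ m, n = m + 1 := ⟨n - 1, by omega⟩
  obtain ⟨q0, q1, q2⟩ := Ppath_values m
  obtain ⟨r0, r1, r2⟩ := Ppath_values (m+1)
  refine ⟨?_, ?_, ?_⟩
  · rw [show 3*(m+1) = 3*m+3 from by ring, eval_indPoly_cycle (3*m), q2, q0, pow_succ]
    ring
  · rw [show 3*(m+1)+1 = (3*m+1)+3 from by ring, eval_indPoly_cycle (3*m+1),
      show 3*m+1+2 = 3*(m+1) from by ring, r0, q1]
    ring
  · rw [show 3*(m+1)+2 = (3*m+2)+3 from by ring, eval_indPoly_cycle (3*m+2),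
      show 3*m+2+2 = 3*(m+1)+1 from by ring, r1, q2, pow_succ, pow_succ]
    ring
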